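/- arXiv:1609.07702 — 4 statements merged into one kernel-verified Lean document; each statement's English description precedes it below -/
import Mathlib

section
/- Let w₀ ∈ ℂ with w₀ ≠ 0 and |w₀| ≠ 1. Suppose that for every x ∈ ℝ, the complex number (x² − w₀²)·(x² − 1/w₀²) is real and nonnegative. Then w₀² is a negative real number. -/
open Complex

/-- Let `w₀ ∈ ℂ`, `w₀ ≠ 0`, `|w₀| ≠ 1`. If `(x² − w₀²)(x² − 1/w₀²)` is real and
nonnegative for every real `x`, then `w₀²` is a negative real number. -/
theorem zero_is_purely_imaginary (w₀ : ℂ) (hw0 : w₀ ≠ 0) (habs : ‖w₀‖ ≠ 1)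
    (h : ∀ x : ℝ,
      (((x : ℂ) ^ 2 - w₀ ^ 2) * ((x : ℂ) ^ 2 - 1 / w₀ ^ 2)).im = 0 ∧
        0 ≤ (((x : ℂ) ^ 2 - w₀ ^ 2) * ((x : ℂ) ^ 2 - 1 / w₀ ^ 2)).re) :
    (w₀ ^ 2).im = 0 ∧ (w₀ ^ 2).re < 0 := by
  set w := w₀ ^ 2 with hw
  have hwne : w ≠ 0 := pow_ne_zero _ hw0
  have hns : Complex.normSq w ≠ 1 := by
    intro hc
    apply habs
    have h2 : ‖w‖ = 1 := by
      have := Complex.sq_norm w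
      nlinarith [norm_nonneg w]
    have h3 : ‖w‖ = ‖w₀‖ ^ 2 := by rw [hw, norm_pow]
    nlinarith [norm_nonneg w₀]
  have hnspos : 0 < Complex.normSq w := Complex.normSq_pos.mpr hwne
  have h1 := (h 1).1
  simp [Complex.mul_im, Complex.sub_im, Complex.sub_re, Complex.inv_im, Complex.inv_re] at h1
  -- h1 should be a polynomial relation; derive im = 0
  have him : w.im = 0 := by
    have key : w.im * (1 - Complex.normSq w) = 0 := by
      field_simp [hnspos.ne'] at h1
      linear_combination h1
    rcases mul_eq_zero.mp key with h' | h'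
    · exact h'
    · exact absurd (by linarith : Complex.normSq w = 1) hns
  refine ⟨him, ?_⟩
  by_contra hre
  push_neg at hre
  have hrpos : 0 < w.re := by
    rcases lt_or_eq_of_le hre with h' | h'
    · exact h'
    · exfalso; exact hwne (Complex.ext h'.symm him)
  set r := w.re with hrdef
  have hns' : Complex.normSq w = r ^ 2 := by
    simp [Complex.normSq_apply, him, sq]
    rfl
  have hr1 : r ≠ 1 := by intro hc; apply hns; rw [hns', hc]; norm_num
  set t : ℝ := (r + 1/r) / 2 with ht
  have htpos : 0 < t := by positivity
  have h2 := (h (Real.sqrt t)).2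
  have hsq : ((Real.sqrt t : ℂ)) ^ 2 = (t : ℂ) := by
    norm_cast
    exact Real.sq_sqrt htpos.le
  rw [hsq] at h2
  simp [Complex.mul_re, Complex.sub_im, Complex.sub_re, Complex.inv_im, Complex.inv_re, him, hns'] at h2
  -- h2 : 0 ≤ (t - r) * (t - r / r^2)
  have hinv : r / r ^ 2 = 1 / r := by field_simp
  rw [hinv] at h2
  have : (t - r) * (t - 1/r) = -(((r - 1/r)/2)^2) := by
    rw [ht]; field_simp; ring
  rw [this] at h2
  have hne : r - 1/r ≠ 0 := by
    intro hc
    have : r ^ 2 = 1 := by field_simp at hc; nlinarith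
    have : r = 1 := by nlinarith
    exact hr1 this
  have : 0 < ((r - 1/r)/2)^2 := by positivity
  linarith
end

section
/- Let α > 0 and ε > 0. Let S be a function meromorphic on a punctured neighborhood of ε in ℂ, having a pole at ε, and satisfying the algebraic relation (z² − ε²)·S(z)² − (2ε² + α²)·z·S(z) − ε²·z² = 0 for all z ≠ ε in that neighborhood. Then the pole of S at ε is simple, and the function z ↦ (S(z) − z)² − (α² + 2ε²)²/(4(z − ε)²) − α⁴/(4ε(z − ε)) extends holomorphically to a full neighborhood of ε. Equivalently, the Laurent expansion of (S(z) − z)² at z = ε is (α² + 2ε²)²/4 · (z − ε)^{−2} + α⁴/(4ε) · (z − ε)^{−1} + O(1); in particular the residue α⁴/(4ε) is nonzero. -/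
open Complex Filter Metric

/-- The Schwarz function of the Neumann oval near the focus `ε`: if `S` is
analytic on a punctured neighborhood of `ε`, has a pole at `ε`, and satisfies
`(z² − ε²)S(z)² − (2ε² + α²)zS(z) − ε²z² = 0` there, then the pole is simple and
`(S(z) − z)² = (α²+2ε²)²/4·(z−ε)⁻² + α⁴/(4ε)·(z−ε)⁻¹ + O(1)`; in particular the
residue `α⁴/(4ε)` is nonzero. -/
theorem neumann_oval_schwarz_singularity (α ε : ℝ) (hα : 0 < α) (hε : 0 < ε)
    (U : Set ℂ) (hU : U ∈ nhds (ε : ℂ))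
    (S : ℂ → ℂ) (hS : DifferentiableOn ℂ S (U \ {(ε : ℂ)}))
    (hpole : Filter.Tendsto (fun z => ‖S z‖) (nhdsWithin (ε : ℂ) {(ε : ℂ)}ᶜ)
      Filter.atTop)
    (hrel : ∀ z ∈ U, z ≠ (ε : ℂ) →
      (z ^ 2 - (ε : ℂ) ^ 2) * (S z) ^ 2 - (2 * (ε : ℂ) ^ 2 + (α : ℂ) ^ 2) * z * S z -
        (ε : ℂ) ^ 2 * z ^ 2 = 0) :
    (∃ T : ℂ → ℂ, AnalyticAt ℂ T (ε : ℂ) ∧ T (ε : ℂ) ≠ 0 ∧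
        ∀ᶠ z in nhdsWithin (ε : ℂ) {(ε : ℂ)}ᶜ, S z = T z / (z - (ε : ℂ))) ∧
      (∃ H : ℂ → ℂ, AnalyticAt ℂ H (ε : ℂ) ∧
        ∀ᶠ z in nhdsWithin (ε : ℂ) {(ε : ℂ)}ᶜ,
          (S z - z) ^ 2 =
            (((α : ℂ) ^ 2 + 2 * (ε : ℂ) ^ 2) ^ 2 / 4) / (z - (ε : ℂ)) ^ 2 +
              ((α : ℂ) ^ 4 / (4 * (ε : ℂ))) / (z - (ε : ℂ)) + H z) ∧
      (α : ℂ) ^ 4 / (4 * (ε : ℂ)) ≠ 0 := by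
  have hεC : (ε : ℂ) ≠ 0 := by
    exact_mod_cast Complex.ofReal_ne_zero.mpr hε.ne'
  have hαC : (α : ℂ) ≠ 0 := by
    exact_mod_cast Complex.ofReal_ne_zero.mpr hα.ne'
  -- a small ball inside U, radius ≤ ε
  obtain ⟨r₀, hr₀, hr₀U⟩ := Metric.mem_nhds_iff.mp hU
  set r : ℝ := min r₀ ε with hrdef
  have hr : 0 < r := lt_min hr₀ hε
  have hrU : ball (ε : ℂ) r ⊆ U := (ball_subset_ball (min_le_left _ _)).trans hr₀U
  have hball : ball (ε : ℂ) r ∈ nhds (ε : ℂ) := ball_mem_nhds _ hr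
  have hballp : ball (ε : ℂ) r \ {(ε : ℂ)} ∈ nhdsWithin (ε : ℂ) {(ε : ℂ)}ᶜ := by
    rw [Set.diff_eq]
    exact Filter.inter_mem (mem_nhdsWithin_of_mem_nhds hball) self_mem_nhdsWithin
  -- basic facts about points in the ball
  have hz0 : ∀ z ∈ ball (ε : ℂ) r, z ≠ 0 := by
    intro z hz h0
    rw [mem_ball, dist_eq, h0 ] at hz
    simp only [zero_sub, norm_neg, Complex.norm_real, Real.norm_eq_abs, abs_of_pos hε] at hz
    exact absurd hz (not_lt.mpr (min_le_right r₀ ε))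
  have hzε : ∀ z ∈ ball (ε : ℂ) r, z + (ε : ℂ) ≠ 0 := by
    intro z hz h0
    have hz' : z = -(ε : ℂ) := by linear_combination h0
    rw [mem_ball, dist_eq, hz'] at hz
    have : ‖(-(ε : ℂ) - (ε : ℂ))‖ = 2 * ε := by
      rw [show (-(ε:ℂ) - (ε:ℂ)) = ((-(2*ε) : ℝ) : ℂ) by push_cast; ring]
      rw [Complex.norm_real, Real.norm_eq_abs]
      rw [abs_of_neg (by linarith)]; ring
    rw [this] at hz
    have := min_le_right r₀ ε
    linarith
  -- S does not vanish on the punctured ball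
  have hSne : ∀ z ∈ ball (ε : ℂ) r, z ≠ (ε : ℂ) → S z ≠ 0 := by
    intro z hz hne h0
    have h := hrel z (hrU hz) hne
    rw [h0] at h
    have : (ε : ℂ) ^ 2 * z ^ 2 = 0 := by linear_combination -h
    rcases mul_eq_zero.mp this with h' | h'
    · exact hεC (by simpa using h')
    · exact hz0 z hz (by simpa using h')
  -- the inverse of S tends to 0
  have hu : Filter.Tendsto (fun z => (S z)⁻¹) (nhdsWithin (ε : ℂ) {(ε : ℂ)}ᶜ) (nhds 0) := by
    rw [tendsto_zero_iff_norm_tendsto_zero]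
    have := hpole.inv_tendsto_atTop
    refine this.congr fun z => ?_
    simp
  -- the function g z = (z - ε) S z
  set g : ℂ → ℂ := fun z => (z - (ε : ℂ)) * S z with hgdef
  set k : ℂ := ((α : ℂ) ^ 2 + 2 * (ε : ℂ) ^ 2) / 2 with hkdef
  -- formula for g on the punctured ball
  have hgform : ∀ z ∈ ball (ε : ℂ) r, z ≠ (ε : ℂ) →
      g z = ((2 * (ε : ℂ) ^ 2 + (α : ℂ) ^ 2) * z + (ε : ℂ) ^ 2 * z ^ 2 * (S z)⁻¹) /
        (z + (ε : ℂ)) := by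
    intro z hz hne
    have hS0 := hSne z hz hne
    have hz1 := hzε z hz
    have h := hrel z (hrU hz) hne
    rw [hgdef]
    field_simp
    ring_nf
    ring_nf at h
    linear_combination h
  -- g tends to k
  have hgtendsto : Filter.Tendsto g (nhdsWithin (ε : ℂ) {(ε : ℂ)}ᶜ) (nhds k) := by
    have hid : Filter.Tendsto (fun z : ℂ => z) (nhdsWithin (ε : ℂ) {(ε : ℂ)}ᶜ)
        (nhds (ε : ℂ)) := tendsto_id.mono_left nhdsWithin_le_nhds
    have h1 : Filter.Tendsto
        (fun z => ((2 * (ε : ℂ) ^ 2 + (α : ℂ) ^ 2) * z + (ε : ℂ) ^ 2 * z ^ 2 * (S z)⁻¹) /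
          (z + (ε : ℂ))) (nhdsWithin (ε : ℂ) {(ε : ℂ)}ᶜ)
        (nhds (((2 * (ε : ℂ) ^ 2 + (α : ℂ) ^ 2) * (ε : ℂ) + (ε : ℂ) ^ 2 * (ε : ℂ) ^ 2 * 0) /
          ((ε : ℂ) + (ε : ℂ)))) := by
      refine Filter.Tendsto.div ?_ (hid.add tendsto_const_nhds) (by
        intro h; apply hεC; linear_combination h/2)
      exact ((tendsto_const_nhds.mul hid).add (((tendsto_const_nhds.mul (hid.pow 2))).mul hu))
    have heq : (((2 * (ε : ℂ) ^ 2 + (α : ℂ) ^ 2) * (ε : ℂ) + (ε : ℂ) ^ 2 * (ε : ℂ) ^ 2 * 0) /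
          ((ε : ℂ) + (ε : ℂ))) = k := by
      have h2 : (ε : ℂ) + (ε : ℂ) ≠ 0 := by
        intro h; apply hεC; linear_combination h / 2
      rw [hkdef, mul_zero, add_zero, div_eq_div_iff h2 two_ne_zero]
      ring
    rw [heq] at h1
    refine h1.congr' ?_
    filter_upwards [hballp] with z hz
    exact (hgform z hz.1 hz.2).symm
  have hkne : k ≠ 0 := by
    rw [hkdef]
    intro h
    have h2 : (α : ℂ) ^ 2 + 2 * (ε : ℂ) ^ 2 = 0 := by
      field_simp at h; linear_combination h
    have : (α : ℝ) ^ 2 + 2 * ε ^ 2 = 0 := by exact_mod_cast h2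
    nlinarith
  -- g is differentiable on the punctured ball
  have hgdiff : DifferentiableOn ℂ g (ball (ε : ℂ) r \ {(ε : ℂ)}) := by
    exact (differentiableOn_id.sub_const _).mul
      (hS.mono (Set.diff_subset_diff_left hrU))
  -- define T as the extension of g
  set T : ℂ → ℂ := Function.update g (ε : ℂ) k with hTdef
  have hgε : g (ε : ℂ) = 0 := by simp [hgdef]
  have hglim : limUnder (nhdsWithin (ε : ℂ) {(ε : ℂ)}ᶜ) g = k := hgtendsto.limUnder_eq
  have hTdiff : DifferentiableOn ℂ T (ball (ε : ℂ) r) := by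
    have hbdd : (fun z => g z - g (ε : ℂ)) =o[nhdsWithin (ε : ℂ) {(ε : ℂ)}ᶜ]
        fun z => (z - (ε : ℂ))⁻¹ := by
      apply Filter.IsBoundedUnder.isLittleO_sub_self_inv
      rw [hgε]
      simpa [Function.comp_def] using hgtendsto.norm.isBoundedUnder_le
    have := Complex.differentiableOn_update_limUnder_of_isLittleO hball hgdiff hbdd
    rwa [hglim] at this
  have hTan : AnalyticAt ℂ T (ε : ℂ) := hTdiff.analyticAt hball
  have hTε : T (ε : ℂ) = k := Function.update_self _ _ _
  have hTg : ∀ z, z ≠ (ε : ℂ) → T z = g z := fun z hz => Function.update_of_ne hz _ _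
  -- first bullet: S z = T z / (z - ε)
  have hfirst : ∀ᶠ z in nhdsWithin (ε : ℂ) {(ε : ℂ)}ᶜ, S z = T z / (z - (ε : ℂ)) := by
    filter_upwards [hballp] with z hz
    rw [hTg z hz.2, hgdef]
    rw [eq_div_iff (sub_ne_zero.mpr hz.2)]
    ring
  -- T satisfies the quadratic relation near ε
  set Φ : ℂ → ℂ := fun z => (z + (ε : ℂ)) * (T z) ^ 2 -
      (2 * (ε : ℂ) ^ 2 + (α : ℂ) ^ 2) * z * T z - (ε : ℂ) ^ 2 * z ^ 2 * (z - (ε : ℂ))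
    with hΦdef
  have hΦdiff : DifferentiableAt ℂ Φ (ε : ℂ) := by
    have hT : DifferentiableAt ℂ T (ε : ℂ) := hTdiff.differentiableAt hball
    fun_prop
  have hΦpunct : ∀ᶠ z in nhdsWithin (ε : ℂ) {(ε : ℂ)}ᶜ, Φ z = 0 := by
    filter_upwards [hballp] with z hz
    have h := hrel z (hrU hz.1) hz.2
    rw [hΦdef]
    simp only
    rw [hTg z hz.2, hgdef]
    linear_combination (z - (ε : ℂ)) * h
  have hΦε : Φ (ε : ℂ) = 0 := by
    have h1 : Filter.Tendsto Φ (nhdsWithin (ε : ℂ) {(ε : ℂ)}ᶜ) (nhds (Φ (ε : ℂ))) :=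
      hΦdiff.continuousAt.continuousWithinAt
    have h2 : Filter.Tendsto Φ (nhdsWithin (ε : ℂ) {(ε : ℂ)}ᶜ) (nhds 0) :=
      Filter.Tendsto.congr' (Filter.EventuallyEq.symm hΦpunct) tendsto_const_nhds
    exact tendsto_nhds_unique h1 h2
  have hΦnhds : ∀ᶠ z in nhds (ε : ℂ), Φ z = 0 := by
    rw [← nhdsNE_sup_pure]
    rw [Filter.eventually_sup, Filter.eventually_pure]
    exact ⟨hΦpunct, hΦε⟩
  have hΦderiv : deriv Φ (ε : ℂ) = 0 := by
    have : Φ =ᶠ[nhds (ε : ℂ)] fun _ => 0 := hΦnhds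
    rw [this.deriv_eq]
    simp
  -- compute the derivative of T at ε
  have hTd : DifferentiableAt ℂ T (ε : ℂ) := hTdiff.differentiableAt hball
  set t' : ℂ := deriv T (ε : ℂ) with ht'def
  have hTderiv : HasDerivAt T t' (ε : ℂ) := hTd.hasDerivAt
  have hΦhas : HasDerivAt (fun z : ℂ => (z + (ε : ℂ)) * T z ^ 2 -
      (2 * (ε : ℂ) ^ 2 + (α : ℂ) ^ 2) * z * T z - (ε : ℂ) ^ 2 * z ^ 2 * (z - (ε : ℂ)))
      ((T (ε : ℂ)) ^ 2 + ((ε : ℂ) + (ε : ℂ)) * (2 * T (ε : ℂ) * t') -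
        ((2 * (ε : ℂ) ^ 2 + (α : ℂ) ^ 2) * T (ε : ℂ) +
          (2 * (ε : ℂ) ^ 2 + (α : ℂ) ^ 2) * (ε : ℂ) * t') -
        (ε : ℂ) ^ 2 * (3 * (ε : ℂ) ^ 2 - 2 * (ε : ℂ) * (ε : ℂ))) (ε : ℂ) := by
    have h1 := ((hasDerivAt_id' (ε : ℂ)).add_const (ε : ℂ)).fun_mul (hTderiv.fun_pow 2)
    have h2 := ((hasDerivAt_id' (ε : ℂ)).const_mul
      (2 * (ε : ℂ) ^ 2 + (α : ℂ) ^ 2)).fun_mul hTderiv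
    have h3 := (((hasDerivAt_id' (ε : ℂ)).fun_pow 2).const_mul ((ε : ℂ) ^ 2)).fun_mul
      ((hasDerivAt_id' (ε : ℂ)).sub_const (ε : ℂ))
    have h4 := (h1.fun_sub h2).fun_sub h3
    convert! h4 using 1
    push_cast
    ring
  have hteq : 2 * (ε : ℂ) * k * t' = k ^ 2 + (ε : ℂ) ^ 4 := by
    have hd := hΦhas.deriv
    have hΦderiv' : deriv (fun z : ℂ => (z + (ε : ℂ)) * T z ^ 2 -
        (2 * (ε : ℂ) ^ 2 + (α : ℂ) ^ 2) * z * T z - (ε : ℂ) ^ 2 * z ^ 2 * (z - (ε : ℂ)))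
        (ε : ℂ) = 0 := by rw [← hΦdef] at *; exact hΦderiv
    rw [hΦderiv', hTε] at hd
    have this := hd
    have hk2 : (2 * (ε : ℂ) ^ 2 + (α : ℂ) ^ 2) = 2 * k := by rw [hkdef]; ring
    rw [hk2] at this
    linear_combination -this
  -- second bullet
  set A : ℂ := ((α : ℂ) ^ 2 + 2 * (ε : ℂ) ^ 2) ^ 2 / 4 with hAdef
  set B : ℂ := (α : ℂ) ^ 4 / (4 * (ε : ℂ)) with hBdef
  set Φ₂ : ℂ → ℂ := fun z => (T z - z * (z - (ε : ℂ))) ^ 2 - A - B * (z - (ε : ℂ))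
    with hΦ₂def
  have hΦ₂diff : DifferentiableOn ℂ Φ₂ (ball (ε : ℂ) r) := by
    intro z hz
    have := hTdiff z hz
    fun_prop
  have hΦ₂ε : Φ₂ (ε : ℂ) = 0 := by
    rw [hΦ₂def]
    simp only
    rw [hTε, hkdef, hAdef]
    field_simp
    ring
  have hΦ₂has : HasDerivAt Φ₂
      (2 * (T (ε : ℂ) - (ε : ℂ) * ((ε : ℂ) - (ε : ℂ))) *
        (t' - (((ε : ℂ) - (ε : ℂ)) + (ε : ℂ) * 1)) - B) (ε : ℂ) := by
    have hinner : HasDerivAt (fun z : ℂ => T z - z * (z - (ε : ℂ)))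
        (t' - (1 * ((ε : ℂ) - (ε : ℂ)) + (ε : ℂ) * 1)) (ε : ℂ) :=
      hTderiv.sub ((hasDerivAt_id' (ε : ℂ)).mul ((hasDerivAt_id' (ε : ℂ)).sub_const (ε : ℂ)))
    have h4 := ((hinner.fun_pow 2).sub_const A).fun_sub
      (((hasDerivAt_id' (ε : ℂ)).sub_const (ε : ℂ)).const_mul B)
    rw [hΦ₂def]
    convert! h4 using 1
    push_cast
    ring
  have hΦ₂deriv : deriv Φ₂ (ε : ℂ) = 0 := by
    have hkey : 2 * k * (t' - (ε : ℂ)) = B := by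
      rw [hBdef, eq_div_iff (mul_ne_zero (by norm_num) hεC)]
      rw [hkdef] at hteq ⊢
      linear_combination 4 * hteq
    rw [hΦ₂has.deriv, hTε]
    linear_combination hkey
  set H : ℂ → ℂ := dslope (dslope Φ₂ (ε : ℂ)) (ε : ℂ) with hHdef
  have hHdiff : DifferentiableOn ℂ H (ball (ε : ℂ) r) := by
    rw [hHdef]
    rw [Complex.differentiableOn_dslope hball, Complex.differentiableOn_dslope hball]
    exact hΦ₂diff
  have hHan : AnalyticAt ℂ H (ε : ℂ) := hHdiff.analyticAt hball
  have hHval : ∀ z, z ≠ (ε : ℂ) → H z = Φ₂ z / (z - (ε : ℂ)) ^ 2 := by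
    intro z hz
    rw [hHdef, dslope_of_ne _ hz, slope_def_field, dslope_of_ne _ hz, slope_def_field,
      dslope_same, hΦ₂deriv, hΦ₂ε]
    field_simp
    ring
  refine ⟨⟨T, hTan, by rw [hTε]; exact hkne, hfirst⟩, ⟨H, hHan, ?_⟩, ?_⟩
  · refine hfirst.mp ?_
    filter_upwards [hballp] with z hz hSz
    have hzne := sub_ne_zero.mpr hz.2
    rw [hSz, hHval z hz.2, hΦ₂def]
    simp only
    field_simp
    ring
  · exact div_ne_zero (pow_ne_zero 4 hαC) (mul_ne_zero (by norm_num : (4:ℂ) ≠ 0) hεC)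
end

section
/- The limit, as δ → 0 through positive real values, of (1/δ)·(1/(2πi)) ∮_{|w|=1} (w² − 1)·(1 − |1 + δw²|) / w³ dw equals 1/2. -/
open Complex Real Filter

noncomputable def Kfun (δ θ : ℝ) : ℂ :=
  (circleMap 0 1 θ * Complex.I) *
    ((circleMap 0 1 θ ^ 2 - 1) *
      (-(circleMap 0 1 θ ^ 2 + ((circleMap 0 1 θ)⁻¹) ^ 2 + (δ : ℂ))) /
      ((1 + ((‖1 + (δ : ℂ) * circleMap 0 1 θ ^ 2‖ : ℝ) : ℂ)) *
        circleMap 0 1 θ ^ 3))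

lemma circleMap_ne (θ : ℝ) : circleMap 0 1 θ ≠ 0 := by
  intro h
  have := norm_circleMap_zero 1 θ
  rw [h] at this
  simp at this

lemma sq_abs_eq (δ : ℝ) (w : ℂ) (hw : ‖w‖ = 1) :
    ((‖1 + (δ : ℂ) * w ^ 2‖ : ℝ) : ℂ) ^ 2
      = 1 + (δ : ℂ) * w ^ 2 + (δ : ℂ) * (w⁻¹) ^ 2 + (δ : ℂ) ^ 2 := by
  have hw0 : w ≠ 0 := by
    intro h; rw [h] at hw; simp at hw
  have hconj : (starRingEnd ℂ) w = w⁻¹ := by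
    have := Complex.mul_conj w
    have h1 : Complex.normSq w = 1 := by
      have : ‖w‖ ^ 2 = 1 := by rw [hw]; ring
      rwa [Complex.sq_norm] at this
    field_simp [hw0]
    rw [mul_comm]
    rw [this, h1, Complex.ofReal_one]
  have : ((‖1 + (δ : ℂ) * w ^ 2‖ : ℝ) : ℂ) ^ 2
      = (1 + (δ : ℂ) * w ^ 2) * (starRingEnd ℂ) (1 + (δ : ℂ) * w ^ 2) := by
    rw [← Complex.ofReal_pow, Complex.sq_norm, Complex.mul_conj]
  rw [this]
  simp only [map_add, map_one, map_mul, map_pow, hconj, Complex.conj_ofReal]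
  field_simp
  ring

lemma one_add_abs_ne (s : ℝ) (hs : 0 ≤ s) : (1 : ℂ) + (s : ℂ) ≠ 0 := by
  have : ((1 + s : ℝ) : ℂ) ≠ 0 := by
    rw [Complex.ofReal_ne_zero]; linarith
  simpa using this

lemma keyEq (δ : ℝ) (hδ : 0 < δ) (θ : ℝ) :
    ((δ : ℂ))⁻¹ * (deriv (circleMap 0 1) θ •
      ((circleMap 0 1 θ ^ 2 - 1) *
        (1 - ((‖1 + (δ : ℂ) * circleMap 0 1 θ ^ 2‖ : ℝ) : ℂ)) /
        circleMap 0 1 θ ^ 3)) = Kfun δ θ := by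
  set w := circleMap 0 1 θ with hwdef
  have hw : ‖w‖ = 1 := by
    rw [hwdef]; simpa using norm_circleMap_zero 1 θ
  have hw0 : w ≠ 0 := circleMap_ne θ
  set s : ℂ := ((‖1 + (δ : ℂ) * w ^ 2‖ : ℝ) : ℂ) with hsdef
  have hs : s ^ 2 = 1 + (δ : ℂ) * w ^ 2 + (δ : ℂ) * (w⁻¹) ^ 2 + (δ : ℂ) ^ 2 :=
    sq_abs_eq δ w hw
  have h1s : (1 : ℂ) + s ≠ 0 := one_add_abs_ne _ (norm_nonneg _)
  have hδ0 : (δ : ℂ) ≠ 0 := by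
    exact_mod_cast (Complex.ofReal_ne_zero).mpr hδ.ne'
  rw [deriv_circleMap, Kfun, smul_eq_mul]
  simp only [← hwdef, ← hsdef]
  have hcm0 : circleMap 0 1 θ = w := rfl
  have hs' : s ^ 2 * w ^ 2 = w ^ 2 + (δ : ℂ) * w ^ 4 + (δ : ℂ) + (δ : ℂ) ^ 2 * w ^ 2 := by
    have h2 : (w⁻¹) ^ 2 * w ^ 2 = 1 := by field_simp
    calc s ^ 2 * w ^ 2 = (1 + (δ : ℂ) * w ^ 2 + (δ : ℂ) * (w⁻¹) ^ 2 + (δ : ℂ) ^ 2) * w ^ 2 := by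
          rw [hs]
    _ = w ^ 2 + (δ : ℂ) * w ^ 4 + (δ : ℂ) * ((w⁻¹) ^ 2 * w ^ 2) + (δ : ℂ) ^ 2 * w ^ 2 := by ring
    _ = _ := by rw [h2]; ring
  field_simp
  linear_combination (-(w * Complex.I * (w ^ 2 - 1) * w ^ 3) + (1 - w ^ 2) * (1 - Complex.I * w ^ 4)) * hs'

lemma intExp (k : ℤ) (hk : (k : ℂ) * Complex.I ≠ 0) :
    ∫ θ in (0:ℝ)..(2 * π), Complex.exp ((k * Complex.I) * θ) = 0 := by
  rw [integral_exp_mul_complex hk]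
  have h1 : Complex.exp ((k * Complex.I) * (2 * (π : ℂ))) = 1 := by
    rw [show ((k : ℂ) * Complex.I) * (2 * (π : ℂ)) = k * (2 * (π : ℂ) * Complex.I) by
      push_cast; ring]
    exact Complex.exp_int_mul_two_pi_mul_I k
  push_cast
  simp [h1]

lemma K0_eq (θ : ℝ) : Kfun 0 θ =
    -(Complex.I / 2) * (Complex.exp (((2 : ℤ) * Complex.I) * θ)
      + Complex.exp (((-2 : ℤ) * Complex.I) * θ)
      - 1 - Complex.exp (((-4 : ℤ) * Complex.I) * θ)) := by
  have he : Complex.exp (θ * Complex.I) ≠ 0 := Complex.exp_ne_zero _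
  have h2 : Complex.exp (((2 : ℤ) * Complex.I) * θ) = Complex.exp (θ * Complex.I) ^ (2 : ℤ) := by
    rw [← Complex.exp_int_mul]; ring_nf
  have hm2 : Complex.exp (((-2 : ℤ) * Complex.I) * θ) = Complex.exp (θ * Complex.I) ^ (-2 : ℤ) := by
    rw [← Complex.exp_int_mul]; ring_nf
  have hm4 : Complex.exp (((-4 : ℤ) * Complex.I) * θ) = Complex.exp (θ * Complex.I) ^ (-4 : ℤ) := by
    rw [← Complex.exp_int_mul]; ring_nf
  rw [Kfun, h2, hm2, hm4]
  have hcm : circleMap 0 1 θ = Complex.exp (θ * Complex.I) := by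
    simp [circleMap]
  rw [hcm]
  simp only [Complex.ofReal_zero, zero_mul, add_zero, map_one, norm_one, Complex.ofReal_one, zero_add]
  rw [show Complex.exp (θ * Complex.I) ^ (-2 : ℤ) = (Complex.exp (θ * Complex.I) ^ 2)⁻¹ by
    rw [zpow_neg]; norm_cast,
    show Complex.exp (θ * Complex.I) ^ (-4 : ℤ) = (Complex.exp (θ * Complex.I) ^ 4)⁻¹ by
    rw [zpow_neg]; norm_cast,
    show Complex.exp (θ * Complex.I) ^ (2 : ℤ) = Complex.exp (θ * Complex.I) ^ 2 by norm_cast]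
  field_simp
  ring

lemma K0_integral : ∫ θ in (0:ℝ)..(2 * π), Kfun 0 θ = π * Complex.I := by
  have h := fun θ => K0_eq θ
  rw [intervalIntegral.integral_congr (g := fun θ : ℝ =>
    -(Complex.I / 2) * (Complex.exp (((2 : ℤ) * Complex.I) * θ)
      + Complex.exp (((-2 : ℤ) * Complex.I) * θ)
      - 1 - Complex.exp (((-4 : ℤ) * Complex.I) * θ))) (fun θ _ => h θ)]
  rw [intervalIntegral.integral_const_mul]
  have e2 := intExp 2 (by simp [Complex.I_ne_zero])
  have em2 := intExp (-2) (by simp [Complex.I_ne_zero])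
  have em4 := intExp (-4) (by simp [Complex.I_ne_zero])
  have i2 : IntervalIntegrable (fun θ : ℝ => Complex.exp (((2 : ℤ) * Complex.I) * θ)) MeasureTheory.volume 0 (2 * π) := by
    apply Continuous.intervalIntegrable; continuity
  have im2 : IntervalIntegrable (fun θ : ℝ => Complex.exp (((-2 : ℤ) * Complex.I) * θ)) MeasureTheory.volume 0 (2 * π) := by
    apply Continuous.intervalIntegrable; continuity
  have im4 : IntervalIntegrable (fun θ : ℝ => Complex.exp (((-4 : ℤ) * Complex.I) * θ)) MeasureTheory.volume 0 (2 * π) := by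
    apply Continuous.intervalIntegrable; continuity
  have ic : IntervalIntegrable (fun _ : ℝ => (1 : ℂ)) MeasureTheory.volume 0 (2 * π) :=
    intervalIntegrable_const
  rw [intervalIntegral.integral_sub ((i2.add im2).sub ic) im4,
    intervalIntegral.integral_sub (i2.add im2) ic,
    intervalIntegral.integral_add i2 im2, e2, em2, em4]
  simp only [intervalIntegral.integral_const, sub_zero, Complex.real_smul]
  push_cast
  ring

lemma Kcont : Continuous (fun p : ℝ × ℝ => Kfun p.1 p.2) := by
  have hw : Continuous fun p : ℝ × ℝ => circleMap 0 1 p.2 :=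
    (continuous_circleMap 0 1).comp continuous_snd
  have hw0 : ∀ p : ℝ × ℝ, circleMap 0 1 p.2 ≠ 0 := fun p => circleMap_ne _
  have hwinv : Continuous fun p : ℝ × ℝ => (circleMap 0 1 p.2)⁻¹ := hw.inv₀ hw0
  have hδ : Continuous fun p : ℝ × ℝ => ((p.1 : ℝ) : ℂ) :=
    Complex.continuous_ofReal.comp continuous_fst
  have habs : Continuous fun p : ℝ × ℝ =>
      ((‖1 + (p.1 : ℂ) * circleMap 0 1 p.2 ^ 2‖ : ℝ) : ℂ) :=
    Complex.continuous_ofReal.comp (continuous_norm.comp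
      (continuous_const.add (hδ.mul (hw.pow 2))))
  simp only [Kfun, mul_div_assoc']
  apply Continuous.div
  · exact (hw.mul continuous_const).mul
      (((hw.pow 2).sub continuous_const).mul
        ((((hw.pow 2).add (hwinv.pow 2)).add hδ).neg))
  · exact (continuous_const.add habs).mul (hw.pow 3)
  · intro p
    exact mul_ne_zero (one_add_abs_ne _ (norm_nonneg _))
      (pow_ne_zero _ (hw0 p))

lemma Kbound (δ θ : ℝ) (h0 : 0 ≤ δ) (h1 : δ ≤ 1) : ‖Kfun δ θ‖ ≤ 6 := by
  set w := circleMap 0 1 θ with hwdef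
  have hw : ‖w‖ = 1 := by
    rw [hwdef]; simpa using norm_circleMap_zero 1 θ
  set s : ℝ := ‖1 + (δ : ℂ) * w ^ 2‖ with hs
  have hs0 : 0 ≤ s := norm_nonneg _
  have hA : ‖w ^ 2 - (1 : ℂ)‖ ≤ 2 := by
    calc ‖w ^ 2 - (1 : ℂ)‖ ≤ ‖w ^ 2‖ + ‖(1 : ℂ)‖ := norm_sub_le _ _
    _ = 2 := by rw [norm_pow, hw]; norm_num
  have hB : ‖-(w ^ 2 + (w⁻¹) ^ 2 + ((δ : ℝ) : ℂ))‖ ≤ 3 := by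
    rw [norm_neg]
    calc ‖w ^ 2 + (w⁻¹) ^ 2 + ((δ : ℝ) : ℂ)‖
        ≤ ‖w ^ 2 + (w⁻¹) ^ 2‖ + ‖((δ : ℝ) : ℂ)‖ := norm_add_le _ _
    _ ≤ (‖w ^ 2‖ + ‖(w⁻¹) ^ 2‖) + ‖((δ : ℝ) : ℂ)‖ := by
        gcongr; exact norm_add_le _ _
    _ ≤ (1 + 1) + 1 := by
        rw [norm_pow, norm_pow, norm_inv, hw, Complex.norm_real, Real.norm_eq_abs,
          _root_.abs_of_nonneg h0]
        norm_num
        linarith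
    _ = 3 := by norm_num
  have hC : 1 ≤ ‖(1 + ((s : ℝ) : ℂ)) * w ^ 3‖ := by
    rw [norm_mul, norm_pow, hw, one_pow, mul_one,
      show (1 : ℂ) + ((s : ℝ) : ℂ) = ((1 + s : ℝ) : ℂ) by push_cast; ring,
      Complex.norm_real, Real.norm_eq_abs, _root_.abs_of_nonneg (by linarith : (0:ℝ) ≤ 1 + s)]
    linarith
  rw [Kfun, norm_mul, norm_mul, norm_div, norm_mul, hw, Complex.norm_I]
  have hAB : ‖w ^ 2 - (1 : ℂ)‖ * ‖-(w ^ 2 + (w⁻¹) ^ 2 + ((δ : ℝ) : ℂ))‖ ≤ 6 := by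
    nlinarith [norm_nonneg (w ^ 2 - (1 : ℂ)), norm_nonneg (-(w ^ 2 + (w⁻¹) ^ 2 + ((δ : ℝ) : ℂ)))]
  have hdiv := div_le_self (mul_nonneg (norm_nonneg _) (norm_nonneg _) : (0:ℝ) ≤
    ‖w ^ 2 - (1 : ℂ)‖ * ‖-(w ^ 2 + (w⁻¹) ^ 2 + ((δ : ℝ) : ℂ))‖) hC
  nlinarith [div_nonneg (mul_nonneg (norm_nonneg (w ^ 2 - (1 : ℂ))) (norm_nonneg (-(w ^ 2 + (w⁻¹) ^ 2 + ((δ : ℝ) : ℂ))))) (le_trans zero_le_one hC)]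

/-- As `δ → 0⁺`,
`(1/δ)·(1/(2πi)) ∮_{|w|=1} (w²−1)·(1 − |1+δw²|)/w³ dw → 1/2`. -/
theorem limit_of_difference_integral :
    Filter.Tendsto
      (fun δ : ℝ => ((δ : ℂ))⁻¹ * ((1 / (2 * Real.pi * Complex.I)) *
        ∮ w in C(0, 1), (w ^ 2 - 1) *
          (1 - ((‖1 + (δ : ℂ) * w ^ 2‖ : ℝ) : ℂ)) / w ^ 3))
      (nhdsWithin 0 (Set.Ioi 0)) (nhds (1 / 2)) := by
  have hmain : Tendsto (fun δ : ℝ => ∫ θ in (0:ℝ)..(2 * π), Kfun δ θ)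
      (nhdsWithin 0 (Set.Ioi 0)) (nhds (∫ θ in (0:ℝ)..(2 * π), Kfun 0 θ)) := by
    apply intervalIntegral.tendsto_integral_filter_of_dominated_convergence
      (bound := fun _ => (6 : ℝ))
    · filter_upwards with δ
      exact (Kcont.comp (continuous_const.prodMk continuous_id)).aestronglyMeasurable
    · have hIoc : Set.Ioc (0:ℝ) 1 ∈ nhdsWithin (0:ℝ) (Set.Ioi 0) :=
        Ioc_mem_nhdsGT_of_mem (by constructor <;> norm_num)
      filter_upwards [hIoc] with δ hδ
      exact Filter.Eventually.of_forall fun θ _ => Kbound δ θ hδ.1.le hδ.2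
    · exact intervalIntegrable_const
    · refine Filter.Eventually.of_forall fun θ _ => ?_
      exact ((Kcont.comp (continuous_id.prodMk continuous_const)).tendsto 0).mono_left
        nhdsWithin_le_nhds
  have heq : (fun δ : ℝ => ((δ : ℂ))⁻¹ * ((1 / (2 * Real.pi * Complex.I)) *
        ∮ w in C(0, 1), (w ^ 2 - 1) *
          (1 - ((‖1 + (δ : ℂ) * w ^ 2‖ : ℝ) : ℂ)) / w ^ 3))
      =ᶠ[nhdsWithin (0:ℝ) (Set.Ioi 0)]
      (fun δ : ℝ => (1 / (2 * Real.pi * Complex.I)) * ∫ θ in (0:ℝ)..(2 * π), Kfun δ θ) := by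
    filter_upwards [self_mem_nhdsWithin] with δ hδ
    have hδ' : 0 < δ := hδ
    rw [circleIntegral, mul_left_comm,
      ← intervalIntegral.integral_const_mul]
    congr 1
    exact intervalIntegral.integral_congr fun θ _ => keyEq δ hδ' θ
  rw [K0_integral] at hmain
  have hfin := hmain.const_mul (1 / (2 * (Real.pi : ℂ) * Complex.I))
  have hval : (1 / (2 * (Real.pi : ℂ) * Complex.I)) * ((Real.pi : ℂ) * Complex.I)
      = (1 / 2 : ℂ) := by
    have hπ : ((Real.pi : ℝ) : ℂ) ≠ 0 := Complex.ofReal_ne_zero.mpr Real.pi_ne_zero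
    field_simp
  rw [hval] at hfin
  exact Tendsto.congr' heq.symm hfin
end

section
/- Let a > 0, 0 < b < 1, and let r > 0 be small enough that the closed ball of radius r centered at b avoids the points −b, 1/b, −1/b. Define g(w) = (w² − 1)²·(w² + a²)·(1 + a²w²) / ((w² − b²)²·(1 − b²w²)²), and let f be analytic on the open ball B(b,r). Then for every ρ with 0 < ρ < r: (1/(4πi)) ∮_{|w−b|=ρ} g(w)·(f(w) − f(b))·f′(w) dw = (1/2) · ((b² − 1)²·(b² + a²)·(1 + a²b²) / (4b²·(1 − b⁴)²)) · f′(b)². -/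
set_option maxHeartbeats 1000000


open Complex Metric Real

/-- Let `a > 0`, `0 < b < 1`, and `r > 0` small enough that the closed ball of
radius `r` about `b` avoids `−b`, `1/b`, `−1/b`.  With
`g(w) = (w²−1)²(w²+a²)(1+a²w²)/((w²−b²)²(1−b²w²)²)` and `f` analytic on `B(b,r)`,
for every `0 < ρ < r`:
`(1/(4πi)) ∮_{|w−b|=ρ} g(w)(f(w) − f(b))f′(w) dw
  = (1/2)·((b²−1)²(b²+a²)(1+a²b²)/(4b²(1−b⁴)²))·f′(b)²`. -/
theorem quadrature_weight_formula (a b r : ℝ) (ha : 0 < a) (hb0 : 0 < b) (hb1 : b < 1)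
    (hr : 0 < r)
    (havoid : (-(b : ℂ)) ∉ closedBall (b : ℂ) r ∧ ((b : ℂ)⁻¹) ∉ closedBall (b : ℂ) r ∧
      (-(b : ℂ)⁻¹) ∉ closedBall (b : ℂ) r)
    (f : ℂ → ℂ) (hf : DifferentiableOn ℂ f (ball (b : ℂ) r))
    (ρ : ℝ) (hρ : 0 < ρ) (hρr : ρ < r) :
    (1 / (4 * Real.pi * Complex.I)) *
        (∮ w in C((b : ℂ), ρ),
          ((w ^ 2 - 1) ^ 2 * (w ^ 2 + (a : ℂ) ^ 2) * (1 + (a : ℂ) ^ 2 * w ^ 2) /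
              ((w ^ 2 - (b : ℂ) ^ 2) ^ 2 * (1 - (b : ℂ) ^ 2 * w ^ 2) ^ 2)) *
            (f w - f b) * deriv f w) =
      (1 / 2) *
        (((b : ℂ) ^ 2 - 1) ^ 2 * ((b : ℂ) ^ 2 + (a : ℂ) ^ 2) * (1 + (a : ℂ) ^ 2 * (b : ℂ) ^ 2) /
          (4 * (b : ℂ) ^ 2 * (1 - (b : ℂ) ^ 4) ^ 2)) * (deriv f b) ^ 2 := by
  obtain ⟨h1, h2, h3⟩ := havoid
  have hbne : (b : ℂ) ≠ 0 := by
    exact_mod_cast hb0.ne'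
  set g1 : ℂ → ℂ := fun w =>
    (w ^ 2 - 1) ^ 2 * (w ^ 2 + (a:ℂ) ^ 2) * (1 + (a:ℂ) ^ 2 * w ^ 2) /
      ((w + (b:ℂ)) ^ 2 * (1 - (b:ℂ) ^ 2 * w ^ 2) ^ 2) with hg1
  set F : ℂ → ℂ := fun w => g1 w * dslope f (b:ℂ) w * deriv f w with hF
  have hplus : ∀ z ∈ ball (b:ℂ) r, z + (b:ℂ) ≠ 0 := by
    intro z hz h
    apply h1
    have hz' : z = -(b:ℂ) := by linear_combination h
    rw [← hz']
    exact ball_subset_closedBall hz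
  have hquad : ∀ z ∈ ball (b:ℂ) r, 1 - (b:ℂ)^2 * z^2 ≠ 0 := by
    intro z hz h
    have h0 : ((b:ℂ) * z - 1) * ((b:ℂ) * z + 1) = 0 := by linear_combination -h
    rcases mul_eq_zero.1 h0 with h' | h'
    · apply h2
      have hz' : z = (b:ℂ)⁻¹ := by
        field_simp
        linear_combination h'
      rw [← hz']
      exact ball_subset_closedBall hz
    · apply h3
      have hz' : z = -(b:ℂ)⁻¹ := by
        field_simp
        linear_combination h'
      rw [← hz']
      exact ball_subset_closedBall hz
  have hg1d : DifferentiableOn ℂ g1 (ball (b:ℂ) r) := by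
    apply DifferentiableOn.div
    · fun_prop
    · fun_prop
    · intro z hz
      exact mul_ne_zero (pow_ne_zero _ (hplus z hz)) (pow_ne_zero _ (hquad z hz))
  have hds : DifferentiableOn ℂ (dslope f (b:ℂ)) (ball (b:ℂ) r) :=
    (differentiableOn_dslope (ball_mem_nhds _ hr)).2 hf
  have hderiv : DifferentiableOn ℂ (deriv f) (ball (b:ℂ) r) :=
    ((hf.analyticOnNhd isOpen_ball).deriv).differentiableOn
  have hFd : DifferentiableOn ℂ F (ball (b:ℂ) r) := (hg1d.mul hds).mul hderiv
  have hsub : closedBall (b:ℂ) ρ ⊆ ball (b:ℂ) r := closedBall_subset_ball hρr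
  have hFc : DiffContOnCl ℂ F (ball (b:ℂ) ρ) := by
    apply DifferentiableOn.diffContOnCl
    rw [closure_ball _ hρ.ne']
    exact hFd.mono hsub
  have hkey := hFc.circleIntegral_sub_inv_smul (mem_ball_self hρ)
  have hEq : (∮ w in C((b : ℂ), ρ),
          ((w ^ 2 - 1) ^ 2 * (w ^ 2 + (a : ℂ) ^ 2) * (1 + (a : ℂ) ^ 2 * w ^ 2) /
              ((w ^ 2 - (b : ℂ) ^ 2) ^ 2 * (1 - (b : ℂ) ^ 2 * w ^ 2) ^ 2)) *
            (f w - f b) * deriv f w)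
      = ∮ z in C((b:ℂ), ρ), (z - (b:ℂ))⁻¹ • F z := by
    apply circleIntegral.integral_congr hρ.le
    intro z hz
    have hzb : z ≠ (b:ℂ) := by
      intro h
      rw [mem_sphere, h, dist_self] at hz
      exact hρ.ne hz
    have hzr : z ∈ ball (b:ℂ) r := hsub (sphere_subset_closedBall hz)
    have h1z := hplus z hzr
    have h2z := hquad z hzr
    have h3z : z - (b:ℂ) ≠ 0 := sub_ne_zero.2 hzb
    have h4z : z ^ 2 - (b:ℂ) ^ 2 ≠ 0 := by
      rw [show z ^ 2 - (b:ℂ) ^ 2 = (z - b) * (z + b) by ring]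
      exact mul_ne_zero h3z h1z
    simp only [hF, hg1, smul_eq_mul, dslope_of_ne f hzb, slope_def_field]
    field_simp
    ring
  rw [hEq, hkey]
  have hbb : (b:ℂ) ∈ ball (b:ℂ) r := mem_ball_self hr
  have h4 : 1 - (b:ℂ)^2 * (b:ℂ)^2 ≠ 0 := hquad _ hbb
  have h4' : 1 - (b:ℂ)^4 ≠ 0 := by
    intro h
    apply h4
    linear_combination h
  have hπ : (Real.pi : ℂ) ≠ 0 := by
    exact_mod_cast Real.pi_ne_zero
  have hplusb : ((b:ℂ) + b) ≠ 0 := hplus _ hbb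
  have hFb : F (b:ℂ) =
      (((b : ℂ) ^ 2 - 1) ^ 2 * ((b : ℂ) ^ 2 + (a : ℂ) ^ 2) * (1 + (a : ℂ) ^ 2 * (b : ℂ) ^ 2) /
        (4 * (b : ℂ) ^ 2 * (1 - (b : ℂ) ^ 4) ^ 2)) * (deriv f b) ^ 2 := by
    simp only [hF, hg1, dslope_same]
    field_simp
    ring
  rw [smul_eq_mul, hFb]
  have hden : (4 : ℂ) * (b:ℂ) ^ 2 * (1 - (b:ℂ) ^ 4) ^ 2 ≠ 0 := by
    refine mul_ne_zero (mul_ne_zero ?_ (pow_ne_zero _ hbne)) (pow_ne_zero _ h4')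
    norm_num
  field_simp
  ring
end
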